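/- Let p be a prime with p > n ≥ 2. The number of vectors v = (v_1,...,v_n) in (Z/pZ)^n such that v_i ≠ v_j for all 1 ≤ i < j ≤ n, and v_i ≠ v_n + a for all 1 ≤ i ≤ n-1 and all a ∈ {1,...,n-i}, equals p·(p-n)^{n-1}. -/

import Mathlib

open Finset Function

lemma count_inj_avoid {α : Type*} [Fintype α] [DecidableEq α] :
    ∀ (m : ℕ) (A : Fin m → Finset α),
      (∀ i j : Fin m, i ≤ j → A j ⊆ A i) →
      Nat.card {v : Fin m → α // Injective v ∧ ∀ i, v i ∉ A i} =
        ∏ i : Fin m, (Fintype.card α - (A i).card - (i : ℕ)) := by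
  intro m
  induction m with
  | zero =>
    intro A hA
    rw [Fin.prod_univ_zero]
    have e : {v : Fin 0 → α // Injective v ∧ ∀ i, v i ∉ A i} ≃ (Fin 0 → α) :=
      Equiv.subtypeUnivEquiv (fun v => ⟨fun a => a.elim0, fun i => i.elim0⟩)
    rw [Nat.card_congr e]
    simp [Nat.card_eq_fintype_card]
  | succ m ih =>
    intro A hA
    have e : {v : Fin (m+1) → α // Injective v ∧ ∀ i, v i ∉ A i} ≃
        Σ x : {x : α // x ∉ A 0},
          {w : Fin m → α // Injective w ∧ ∀ i, w i ∉ insert x.1 (A i.succ)} := by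
      refine ⟨fun v => ⟨⟨v.1 0, v.2.2 0⟩, ⟨fun i => v.1 i.succ, ?_, ?_⟩⟩,
        fun xw => ⟨Fin.cons xw.1.1 xw.2.1, ?_, ?_⟩, ?_, ?_⟩
      · exact v.2.1.comp (Fin.succ_injective m)
      · intro i
        simp only [Finset.mem_insert, not_or]
        exact ⟨fun h => Fin.succ_ne_zero i (v.2.1 h), v.2.2 i.succ⟩
      · rw [Fin.cons_injective_iff]
        refine ⟨?_, xw.2.2.1⟩
        rintro ⟨i, hi⟩
        exact xw.2.2.2 i (by rw [hi]; exact Finset.mem_insert_self _ _)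
      · intro i
        refine Fin.cases ?_ ?_ i
        · simpa using xw.1.2
        · intro j
          simp only [Fin.cons_succ]
          exact fun h => (xw.2.2.2 j) (Finset.mem_insert_of_mem h)
      · rintro ⟨v, hv⟩
        exact Subtype.ext (Fin.cons_self_tail v)
      · rintro ⟨⟨x, hx⟩, ⟨w, hw⟩⟩
        simp [Fin.cons_zero, Fin.tail_cons]
        exact HEq.rfl
    rw [Nat.card_congr e]
    have hfib : ∀ x : {x : α // x ∉ A 0},
        Nat.card {w : Fin m → α // Injective w ∧ ∀ i, w i ∉ insert x.1 (A i.succ)} =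
        ∏ i : Fin m, (Fintype.card α - (A i.succ).card - ((i : ℕ) + 1)) := by
      intro x
      rw [ih (fun i => insert x.1 (A i.succ)) (fun i j hij =>
        Finset.insert_subset_insert _ (hA i.succ j.succ (Fin.succ_le_succ_iff.mpr hij)))]
      refine Finset.prod_congr rfl fun i _ => ?_
      have hx : x.1 ∉ A i.succ := fun h => x.2 (hA 0 i.succ (Fin.zero_le _) h)
      rw [Finset.card_insert_of_notMem hx]
      omega
    rw [Nat.card_eq_fintype_card, Fintype.card_sigma]
    simp_rw [← Nat.card_eq_fintype_card]
    rw [Finset.sum_congr rfl (fun x _ => hfib x), Finset.sum_const,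
      Fin.prod_univ_succ]
    have hcard : (Finset.univ : Finset {x : α // x ∉ A 0}).card = Fintype.card α - (A 0).card := by
      rw [Finset.card_univ, Fintype.card_subtype]
      rw [← Finset.card_compl (A 0)]
      congr 1
      ext y; simp
    rw [hcard, smul_eq_mul]
    simp

lemma inj_of_pairwise {k : ℕ} {β : Type*} (v : Fin k → β)
    (h : ∀ i j : Fin k, i < j → v i ≠ v j) : Injective v := by
  intro i j hij
  by_contra hne
  rcases lt_trichotomy i j with h1 | h1 | h1
  · exact h i j h1 hij
  · exact hne h1
  · exact h j i h1 hij.symm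


/-- Finite-field point count for the complement of the Ish arrangement:
`p * (p - n)^(n-1)` vectors avoid all Ish hyperplanes. -/
theorem ish_count (n p : ℕ) (hp : p.Prime) (hn : 2 ≤ n) (hnp : n < p) :
    Nat.card {v : Fin n → ZMod p //
      (∀ i j : Fin n, i < j → v i ≠ v j) ∧
      (∀ i : Fin n, ∀ a : ℕ, 1 ≤ a → a ≤ n - 1 - (i : ℕ) →
        v i ≠ v ⟨n - 1, by omega⟩ + (a : ZMod p))} = p * (p - n) ^ (n - 1) := by
  haveI : Fact p.Prime := ⟨hp⟩
  obtain ⟨m, rfl⟩ : ∃ m, n = m + 1 := ⟨n - 1, by omega⟩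
  set P : (Fin (m+1) → ZMod p) → Prop := fun v =>
      (∀ i j : Fin (m+1), i < j → v i ≠ v j) ∧
      (∀ i : Fin (m+1), ∀ a : ℕ, 1 ≤ a → a ≤ m + 1 - 1 - (i : ℕ) →
        v i ≠ v (Fin.last m) + (a : ZMod p)) with hP
  show Nat.card {v // P v} = _
  -- translation invariance
  have hshift : ∀ (v : Fin (m+1) → ZMod p) (c : ZMod p), P v → P (fun i => v i + c) := by
    rintro v c ⟨h1, h2⟩
    constructor
    · intro i j hij h
      exact h1 i j hij (by linear_combination h)
    · intro i a ha1 ha2 h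
      exact h2 i a ha1 ha2 (by linear_combination h)
  have e1 : {v // P v} ≃ ZMod p × {v // P v ∧ v (Fin.last m) = 0} := by
    refine ⟨fun v => (v.1 (Fin.last m),
        ⟨fun i => v.1 i + (- v.1 (Fin.last m)), hshift _ _ v.2, by simp⟩),
      fun cw => ⟨fun i => cw.2.1 i + cw.1, hshift _ _ cw.2.2.1⟩, ?_, ?_⟩
    · rintro ⟨v, hv⟩
      apply Subtype.ext
      funext i
      simp
    · rintro ⟨c, ⟨w, hw, h0⟩⟩
      simp only [h0, zero_add, Prod.mk.injEq]
      exact ⟨trivial, Subtype.ext (by funext i; simp [h0])⟩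
  rw [Nat.card_congr e1, Nat.card_prod, Nat.card_zmod]
  -- second equivalence
  set A : Fin m → Finset (ZMod p) :=
    fun i => (Finset.range (m - (i : ℕ) + 1)).image (Nat.cast : ℕ → ZMod p) with hA
  have hzeroA : ∀ i : Fin m, (0 : ZMod p) ∈ A i := by
    intro i
    simp only [hA, Finset.mem_image, Finset.mem_range]
    exact ⟨0, by omega, by simp⟩
  have e2 : {v // P v ∧ v (Fin.last m) = 0} ≃
      {w : Fin m → ZMod p // Injective w ∧ ∀ i, w i ∉ A i} := by
    refine ⟨fun v => ⟨fun i => v.1 i.castSucc, ?_, ?_⟩,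
      fun w => ⟨Fin.snoc w.1 0, ⟨?_, ?_⟩, Fin.snoc_last _ _⟩, ?_, ?_⟩
    · exact (inj_of_pairwise _ v.2.1.1).comp (Fin.castSucc_injective m)
    · intro i hi
      simp only [hA, Finset.mem_image, Finset.mem_range] at hi
      obtain ⟨a, ha, hae⟩ := hi
      rcases Nat.eq_zero_or_pos a with rfl | hpos
      · have : v.1 i.castSucc = v.1 (Fin.last m) := by
          rw [v.2.2]; simpa using hae.symm
        exact (inj_of_pairwise _ v.2.1.1).ne (Fin.castSucc_lt_last i).ne this
      · refine v.2.1.2 i.castSucc a hpos ?_ ?_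
        · simp only [Fin.coe_castSucc]; omega
        · rw [v.2.2, zero_add]; exact hae.symm
    · -- pairwise distinct for snoc
      intro i j hij h
      have hil : i ≠ Fin.last m := by
        intro hl; subst hl; exact absurd (lt_of_lt_of_le hij (Fin.le_last j)) (lt_irrefl _)
      obtain ⟨i', rfl⟩ : ∃ i', i = i'.castSucc :=
        ⟨i.castPred hil, (Fin.castSucc_castPred i hil).symm⟩
      rcases eq_or_ne j (Fin.last m) with rfl | hjl
      · rw [Fin.snoc_castSucc, Fin.snoc_last] at h
        exact w.2.2 i' (h ▸ hzeroA i')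
      · obtain ⟨j', rfl⟩ : ∃ j', j = j'.castSucc :=
          ⟨j.castPred hjl, (Fin.castSucc_castPred j hjl).symm⟩
        rw [Fin.snoc_castSucc, Fin.snoc_castSucc] at h
        exact (Fin.castSucc_lt_castSucc_iff.mp hij).ne (w.2.1 h)
    · -- Ish condition for snoc
      intro i a ha1 ha2 h
      rcases eq_or_ne i (Fin.last m) with rfl | hil
      · simp only [Fin.val_last] at ha2; omega
      · obtain ⟨i', rfl⟩ : ∃ i', i = i'.castSucc :=
          ⟨i.castPred hil, (Fin.castSucc_castPred i hil).symm⟩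
        rw [Fin.snoc_castSucc, Fin.snoc_last, zero_add] at h
        refine w.2.2 i' ?_
        rw [h]
        simp only [hA, Finset.mem_image, Finset.mem_range]
        refine ⟨a, ?_, rfl⟩
        simp only [Fin.coe_castSucc] at ha2
        omega
    · rintro ⟨v, hv, h0⟩
      apply Subtype.ext
      show Fin.snoc (fun i => v i.castSucc) 0 = v
      rw [← h0]
      exact Fin.snoc_init_self v
    · rintro ⟨w, hw⟩
      apply Subtype.ext
      funext i
      simp
  rw [Nat.card_congr e2, count_inj_avoid m A (fun i j hij =>
    Finset.image_subset_image (Finset.range_subset_range.mpr (by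
      have : (i : ℕ) ≤ (j : ℕ) := hij
      omega)))]
  have hcardA : ∀ i : Fin m, (A i).card = m - (i : ℕ) + 1 := by
    intro i
    rw [hA]
    rw [Finset.card_image_of_injOn, Finset.card_range]
    intro a ha b hb hab
    simp only [Finset.coe_range, Set.mem_Iio] at ha hb
    have h1 : a < p := by omega
    have h2 : b < p := by omega
    have := congrArg ZMod.val hab
    rwa [ZMod.val_natCast_of_lt h1, ZMod.val_natCast_of_lt h2] at this
  have hprod : ∀ i : Fin m, Fintype.card (ZMod p) - (A i).card - (i : ℕ) = p - (m + 1) := by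
    intro i
    rw [ZMod.card, hcardA i]
    have := i.2
    omega
  rw [Finset.prod_congr rfl (fun i _ => hprod i), Finset.prod_const, Finset.card_univ,
    Fintype.card_fin]
  simp
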